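/- The function π⁽ⁿ⁾(y) = F(y)ⁿ − F⁻(y)ⁿ, where F and F⁻ are the CDF and strict CDF of the reward under p on a finite set with injective rewards, is a probability mass function: it is nonnegative and its values sum to 1 over Y. -/
import Mathlib


open Finset Real

private lemma key_telescope {Y : Type*} (p r : Y → ℝ) (hr : Function.Injective r)
    (n : ℕ) (hn : 1 ≤ n) (s : Finset Y) :
    ∑ y ∈ s, ((∑ z ∈ s.filter (fun z => r z ≤ r y), p z) ^ n -
      (∑ z ∈ s.filter (fun z => r z < r y), p z) ^ n) = (∑ z ∈ s, p z) ^ n := by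
  classical
  induction s using Finset.strongInduction with
  | _ s ih =>
    rcases s.eq_empty_or_nonempty with rfl | hs
    · simp [zero_pow (by omega : n ≠ 0)]
    · obtain ⟨m, hm, hmax⟩ := s.exists_max_image r hs
      set t := s.erase m with ht
      have hst : s = insert m t := by
        rw [ht, Finset.insert_erase hm]
      have hmt : m ∉ t := Finset.notMem_erase _ _
      have hlt : ∀ y ∈ t, r y < r m := by
        intro y hy
        have hne : y ≠ m := Finset.ne_of_mem_erase hy
        exact lt_of_le_of_ne (hmax y (Finset.mem_of_mem_erase hy)) (fun h => hne (hr h))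
      have hfilter_le : ∀ y ∈ t, s.filter (fun z => r z ≤ r y) = t.filter (fun z => r z ≤ r y) := by
        intro y hy
        rw [hst, Finset.filter_insert, if_neg (not_le.mpr (hlt y hy))]
      have hfilter_lt : ∀ y ∈ t, s.filter (fun z => r z < r y) = t.filter (fun z => r z < r y) := by
        intro y hy
        rw [hst, Finset.filter_insert, if_neg (not_lt.mpr (hlt y hy).le)]
      have hm_le : s.filter (fun z => r z ≤ r m) = s := by
        apply Finset.filter_true_of_mem
        intro z hz; exact hmax z hz
      have hm_lt : s.filter (fun z => r z < r m) = t := by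
        rw [hst, Finset.filter_insert, if_neg (lt_irrefl _)]
        apply Finset.filter_true_of_mem
        intro z hz; exact hlt z hz
      rw [hst, Finset.sum_insert hmt, ← hst, hm_le, hm_lt]
      have : ∑ y ∈ t, ((∑ z ∈ s.filter (fun z => r z ≤ r y), p z) ^ n -
          (∑ z ∈ s.filter (fun z => r z < r y), p z) ^ n)
          = ∑ y ∈ t, ((∑ z ∈ t.filter (fun z => r z ≤ r y), p z) ^ n -
          (∑ z ∈ t.filter (fun z => r z < r y), p z) ^ n) := by
        apply Finset.sum_congr rfl
        intro y hy
        rw [hfilter_le y hy, hfilter_lt y hy]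
      rw [this, ih t (Finset.erase_ssubset hm)]
      ring

theorem stmt_3
    {Y : Type*} [Fintype Y]
    (p : Y → ℝ) (r : Y → ℝ)
    (hp : ∀ y, 0 < p y) (hsum : ∑ y, p y = 1)
    (hr : Function.Injective r)
    (n : ℕ) (hn : 1 ≤ n) :
    (∀ y : Y,
      0 ≤ (∑ z ∈ Finset.univ.filter (fun z => r z ≤ r y), p z) ^ n -
          (∑ z ∈ Finset.univ.filter (fun z => r z < r y), p z) ^ n) ∧
    (∑ y : Y,
        ((∑ z ∈ Finset.univ.filter (fun z => r z ≤ r y), p z) ^ n -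
         (∑ z ∈ Finset.univ.filter (fun z => r z < r y), p z) ^ n)) = 1 := by
  constructor
  · intro y
    rw [sub_nonneg]
    apply pow_le_pow_left₀
    · exact Finset.sum_nonneg fun z _ => (hp z).le
    · apply Finset.sum_le_sum_of_subset_of_nonneg
      · intro z hz
        simp only [Finset.mem_filter] at hz ⊢
        exact ⟨hz.1, hz.2.le⟩
      · intro z _ _; exact (hp z).le
  · rw [key_telescope p r hr n hn Finset.univ, hsum, one_pow]
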